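/- (Theorem 3.3, lower bound) Let σ > 0 and δ > 0, set r = δ/σ, and let p_z be the standardized two-component Gaussian mixture density p_z(v) = (N(v;−δ̂,σ̂) + N(v;δ̂,σ̂))/2 with δ̂ = δ/√(σ²+δ²), σ̂ = σ/√(σ²+δ²). Then the Kullback–Leibler divergence from the standard normal density satisfies KL(p_z ‖ N(·;0,1)) ≥ (1/2) ln(1 + r²) − ln 2. -/

import Mathlib

open Real MeasureTheory

/-- The univariate Gaussian density `N(v; μ, σ) = (1/(σ√(2π))) exp(−(v−μ)²/(2σ²))`. -/
noncomputable def gauss (μ σ : ℝ) (v : ℝ) : ℝ :=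
  (1 / (σ * Real.sqrt (2 * π))) * Real.exp (-((v - μ) ^ 2) / (2 * σ ^ 2))

/-- The KL divergence `KL(p‖q) = ∫ p(v) ln(p(v)/q(v)) dv` of densities on ℝ. -/
noncomputable def klDiv (p q : ℝ → ℝ) : ℝ :=
  ∫ v : ℝ, p v * Real.log (p v / q v)

lemma sq_mul_exp_integrable {b : ℝ} (hb : 0 < b) :
    Integrable (fun x : ℝ => x ^ 2 * Real.exp (-b * x ^ 2)) := by
  have h := integrable_rpow_mul_exp_neg_mul_sq hb (show (-1:ℝ) < 2 by norm_num)
  have e : ∀ x : ℝ, x ^ (2:ℝ) = x ^ 2 := fun x => by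
    rw [show (2:ℝ) = ((2:ℕ):ℝ) by norm_num, Real.rpow_natCast]
  simpa [e] using h

lemma integral_id_mul_exp (b : ℝ) : ∫ x : ℝ, x * Real.exp (-b * x ^ 2) = 0 := by
  have h := integral_neg_eq_self (fun x : ℝ => x * Real.exp (-b * x ^ 2)) volume
  simp only [neg_sq, neg_mul] at h
  rw [integral_neg] at h
  simp only [neg_mul]
  linarith

lemma integral_sq_mul_exp {b : ℝ} (hb : 0 < b) :
    ∫ x : ℝ, x ^ 2 * Real.exp (-b * x ^ 2) = Real.sqrt (π / b) / (2 * b) := by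
  have hderiv : ∀ x : ℝ, HasDerivAt (fun x : ℝ => x * Real.exp (-b * x ^ 2))
      (Real.exp (-b * x ^ 2) - 2 * b * (x ^ 2 * Real.exp (-b * x ^ 2))) x := by
    intro x
    have h1 : HasDerivAt (fun x : ℝ => -b * x ^ 2) (-b * (2 * x)) x := by
      simpa using ((hasDerivAt_pow 2 x).const_mul (-b))
    have h2 := h1.exp
    have h3 := (hasDerivAt_id x).fun_mul h2
    simp only [id] at h3
    refine h3.congr_deriv ?_
    ring
  have hint : Integrable (fun x : ℝ => Real.exp (-b * x ^ 2) -
      2 * b * (x ^ 2 * Real.exp (-b * x ^ 2))) :=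
    (integrable_exp_neg_mul_sq hb).sub ((sq_mul_exp_integrable hb).const_mul _)
  have h0 := integral_eq_zero_of_hasDerivAt_of_integrable hderiv hint
    (integrable_mul_exp_neg_mul_sq hb)
  rw [integral_sub (integrable_exp_neg_mul_sq hb)
    ((sq_mul_exp_integrable hb).const_mul _), integral_const_mul, integral_gaussian] at h0
  have hb' : (2 : ℝ) * b ≠ 0 := by positivity
  rw [eq_div_iff hb']
  linarith

lemma gauss_pos {μ σ : ℝ} (hσ : 0 < σ) (v : ℝ) : 0 < gauss μ σ v := by
  unfold gauss
  have h2π : (0:ℝ) < 2 * π := by positivity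
  positivity

lemma gauss_le {μ σ : ℝ} (hσ : 0 < σ) (v : ℝ) :
    gauss μ σ v ≤ 1 / (σ * Real.sqrt (2 * π)) := by
  unfold gauss
  have h2π : (0:ℝ) < 2 * π := by positivity
  have h1 : Real.exp (-((v - μ) ^ 2) / (2 * σ ^ 2)) ≤ 1 := by
    rw [Real.exp_le_one_iff]
    apply div_nonpos_of_nonpos_of_nonneg
    · exact neg_nonpos.mpr (sq_nonneg _)
    · positivity
  nlinarith [mul_pos hσ (Real.sqrt_pos.mpr h2π), Real.exp_pos (-((v - μ) ^ 2) / (2 * σ ^ 2)),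
    mul_le_mul_of_nonneg_left h1 (le_of_lt (one_div_pos.mpr (mul_pos hσ (Real.sqrt_pos.mpr h2π))))]

lemma log_gauss {μ σ : ℝ} (hσ : 0 < σ) (v : ℝ) :
    Real.log (gauss μ σ v) = -Real.log σ - Real.log (Real.sqrt (2 * π))
      - (v - μ) ^ 2 / (2 * σ ^ 2) := by
  unfold gauss
  have h2π : (0:ℝ) < Real.sqrt (2 * π) := Real.sqrt_pos.mpr (by positivity)
  rw [Real.log_mul (by positivity) (Real.exp_ne_zero _), Real.log_exp, one_div, Real.log_inv,
    Real.log_mul (ne_of_gt hσ) (ne_of_gt h2π)]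
  ring

lemma gauss_eq_shift (μ σ : ℝ) (x : ℝ) :
    gauss μ σ (x + μ) = (1 / (σ * Real.sqrt (2 * π))) * Real.exp (-(1/(2*σ^2)) * x ^ 2) := by
  unfold gauss
  congr 1
  congr 1
  ring

lemma gauss_poly_integrable (μ σ A B C : ℝ) (hσ : 0 < σ) :
    Integrable (fun v : ℝ => gauss μ σ v * (A + B * (v - μ) + C * (v - μ) ^ 2)) := by
  have hb : (0:ℝ) < 1/(2*σ^2) := by positivity
  have key : Integrable (fun x : ℝ => gauss μ σ (x + μ) * (A + B * x + C * x ^ 2)) := by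
    have base : Integrable (fun x : ℝ =>
        (1 / (σ * Real.sqrt (2 * π))) * (A * Real.exp (-(1/(2*σ^2)) * x ^ 2)
          + B * (x * Real.exp (-(1/(2*σ^2)) * x ^ 2))
          + C * (x ^ 2 * Real.exp (-(1/(2*σ^2)) * x ^ 2)))) := by
      exact ((((integrable_exp_neg_mul_sq hb).const_mul A).add
        ((integrable_mul_exp_neg_mul_sq hb).const_mul B)).add
        ((sq_mul_exp_integrable hb).const_mul C)).const_mul _
    refine base.congr (Filter.Eventually.of_forall fun x => ?_)
    dsimp only
    rw [gauss_eq_shift]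
    ring
  have h := key.comp_add_right (-μ)
  refine h.congr (Filter.Eventually.of_forall fun v => ?_)
  dsimp only
  rw [neg_add_cancel_right]
  ring

lemma gauss_poly_integral (μ σ A B C : ℝ) (hσ : 0 < σ) :
    ∫ v : ℝ, gauss μ σ v * (A + B * (v - μ) + C * (v - μ) ^ 2) = A + C * σ ^ 2 := by
  have hb : (0:ℝ) < 1/(2*σ^2) := by positivity
  have h2π : (0:ℝ) < Real.sqrt (2 * π) := Real.sqrt_pos.mpr (by positivity)
  have shift := integral_add_right_eq_self (μ := MeasureTheory.volume)
    (fun v : ℝ => gauss μ σ v * (A + B * (v - μ) + C * (v - μ) ^ 2)) μ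
  rw [← shift]
  have eq1 : ∀ x : ℝ, gauss μ σ (x + μ) * (A + B * (x + μ - μ) + C * (x + μ - μ) ^ 2)
      = (1 / (σ * Real.sqrt (2 * π))) * (A * Real.exp (-(1/(2*σ^2)) * x ^ 2)
        + B * (x * Real.exp (-(1/(2*σ^2)) * x ^ 2))
        + C * (x ^ 2 * Real.exp (-(1/(2*σ^2)) * x ^ 2))) := by
    intro x
    rw [gauss_eq_shift]
    ring
  rw [integral_congr_ae (Filter.Eventually.of_forall eq1)]
  rw [integral_const_mul, integral_add, integral_add, integral_const_mul, integral_const_mul,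
    integral_const_mul, integral_gaussian, integral_id_mul_exp, integral_sq_mul_exp hb]
  · have hsq : Real.sqrt (π / (1/(2*σ^2))) = σ * Real.sqrt (2 * π) := by
      rw [show π / (1/(2*σ^2)) = σ^2 * (2*π) by field_simp, Real.sqrt_mul (by positivity),
        Real.sqrt_sq hσ.le]
    rw [hsq]
    have h1 : (1:ℝ) / (2 * (1/(2*σ^2))) = σ^2 := by field_simp
    have hne : σ * Real.sqrt (2 * π) ≠ 0 := by positivity
    field_simp
    ring
  · exact (integrable_exp_neg_mul_sq hb).const_mul A
  · exact (integrable_mul_exp_neg_mul_sq hb).const_mul B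
  · exact ((integrable_exp_neg_mul_sq hb).const_mul A).add
      ((integrable_mul_exp_neg_mul_sq hb).const_mul B)
  · exact (sq_mul_exp_integrable hb).const_mul C

lemma gauss_poly_integrable' (μ σ A C : ℝ) (hσ : 0 < σ) :
    Integrable (fun v : ℝ => gauss μ σ v * (A + C * v ^ 2)) :=
  (gauss_poly_integrable μ σ (A + C*μ^2) (2*C*μ) C hσ).congr
    (Filter.Eventually.of_forall fun v => by ring)

set_option maxHeartbeats 2000000 in
/-- Theorem 3.3, lower bound: for the standardized two-component Gaussian
mixture `p_z(v) = (N(v;−δ̂,σ̂) + N(v;δ̂,σ̂))/2` with `r = δ/σ`,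
`KL(p_z ‖ N(·;0,1)) ≥ (1/2) ln(1 + r²) − ln 2`. -/
theorem klDiv_standardized_mixture_lower (σ δ : ℝ) (hσ : 0 < σ) (hδ : 0 < δ)
    (r δhat σhat : ℝ) (hr : r = δ / σ)
    (hδhat : δhat = δ / Real.sqrt (σ ^ 2 + δ ^ 2))
    (hσhat : σhat = σ / Real.sqrt (σ ^ 2 + δ ^ 2)) :
    klDiv (fun v => (gauss (-δhat) σhat v + gauss δhat σhat v) / 2) (gauss 0 1) ≥
      (1 / 2) * Real.log (1 + r ^ 2) - Real.log 2 := by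
  have hπ := Real.pi_pos
  set s := Real.sqrt (σ ^ 2 + δ ^ 2) with hs_def
  have hs : 0 < s := Real.sqrt_pos.mpr (by positivity)
  have hs2 : s ^ 2 = σ ^ 2 + δ ^ 2 := Real.sq_sqrt (by positivity)
  have hσh : 0 < σhat := by rw [hσhat]; exact div_pos hσ hs
  have hδh : 0 < δhat := by rw [hδhat]; exact div_pos hδ hs
  have hone : σhat ^ 2 + δhat ^ 2 = 1 := by
    rw [hσhat, hδhat, div_pow, div_pow, hs2, ← add_div, div_self (by positivity)]
  -- abbreviations
  set A : ℝ := -Real.log σhat - Real.log 2 + δhat ^ 2 / 2 with hA_def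
  set C : ℝ := 1/2 - 1/(2*σhat^2) with hC_def
  have hqpos : ∀ v : ℝ, 0 < gauss 0 1 v := fun v => gauss_pos one_pos v
  -- pointwise identity for each component
  have hT : ∀ μ0 : ℝ, μ0 ^ 2 = δhat ^ 2 → ∀ v : ℝ,
      gauss μ0 σhat v * Real.log (gauss μ0 σhat v / (2 * gauss 0 1 v))
        = gauss μ0 σhat v * (A + μ0 * (v - μ0) + C * (v - μ0) ^ 2) := by
    intro μ0 hμ0 v
    have hp := gauss_pos (μ := μ0) hσh v
    rw [Real.log_div (ne_of_gt hp) (mul_pos two_pos (hqpos v)).ne', Real.log_mul two_ne_zero (hqpos v).ne',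
      log_gauss hσh, log_gauss one_pos]
    rw [hA_def, hC_def, ← hμ0]
    congr 1
    have hσh2 : σhat ^ 2 ≠ 0 := by positivity
    field_simp
    simp only [Real.log_one]
    ring
  have hμ1 : (-δhat) ^ 2 = δhat ^ 2 := by ring
  have hμ2 : δhat ^ 2 = δhat ^ 2 := rfl
  have hint1 : Integrable (fun v : ℝ =>
      gauss (-δhat) σhat v * Real.log (gauss (-δhat) σhat v / (2 * gauss 0 1 v))) :=
    (gauss_poly_integrable (-δhat) σhat A (-δhat) C hσh).congr
      (Filter.Eventually.of_forall fun v => (hT (-δhat) hμ1 v).symm)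
  have hint2 : Integrable (fun v : ℝ =>
      gauss δhat σhat v * Real.log (gauss δhat σhat v / (2 * gauss 0 1 v))) :=
    (gauss_poly_integrable δhat σhat A δhat C hσh).congr
      (Filter.Eventually.of_forall fun v => (hT δhat hμ2 v).symm)
  have hval1 : ∫ v : ℝ, gauss (-δhat) σhat v *
      Real.log (gauss (-δhat) σhat v / (2 * gauss 0 1 v)) = A + C * σhat ^ 2 := by
    rw [integral_congr_ae (Filter.Eventually.of_forall (hT (-δhat) hμ1))]
    exact gauss_poly_integral (-δhat) σhat A (-δhat) C hσh
  have hval2 : ∫ v : ℝ, gauss δhat σhat v *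
      Real.log (gauss δhat σhat v / (2 * gauss 0 1 v)) = A + C * σhat ^ 2 := by
    rw [integral_congr_ae (Filter.Eventually.of_forall (hT δhat hμ2))]
    exact gauss_poly_integral δhat σhat A δhat C hσh
  have hACval : A + C * σhat ^ 2 = -Real.log σhat - Real.log 2 := by
    have hCσ : C * σhat ^ 2 = σhat ^ 2 / 2 - 1/2 := by
      rw [hC_def]; field_simp
    rw [hA_def]; linarith [hone]
  -- the two functions
  set G : ℝ → ℝ := fun v =>
    (1/2) * (gauss (-δhat) σhat v * Real.log (gauss (-δhat) σhat v / (2 * gauss 0 1 v))) +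
    (1/2) * (gauss δhat σhat v * Real.log (gauss δhat σhat v / (2 * gauss 0 1 v))) with hG_def
  set F : ℝ → ℝ := fun v =>
    ((gauss (-δhat) σhat v + gauss δhat σhat v) / 2) *
      Real.log (((gauss (-δhat) σhat v + gauss δhat σhat v) / 2) / gauss 0 1 v) with hF_def
  have hGint : Integrable G := (hint1.const_mul _).add (hint2.const_mul _)
  have hGval : ∫ v : ℝ, G v = -Real.log σhat - Real.log 2 := by
    rw [hG_def]
    rw [integral_add (hint1.const_mul _) (hint2.const_mul _), integral_const_mul,
      integral_const_mul, hval1, hval2]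
    rw [hACval]
    ring
  -- pointwise comparison G ≤ F
  have hPpos : ∀ v : ℝ, 0 < (gauss (-δhat) σhat v + gauss δhat σhat v) / 2 := by
    intro v
    have := gauss_pos (μ := -δhat) hσh v
    have := gauss_pos (μ := δhat) hσh v
    linarith
  have hlogle : ∀ μ0 : ℝ, 0 < σhat → ∀ v : ℝ, 0 < gauss μ0 σhat v →
      gauss μ0 σhat v ≤ gauss (-δhat) σhat v + gauss δhat σhat v →
      Real.log (gauss μ0 σhat v / (2 * gauss 0 1 v)) ≤
        Real.log (((gauss (-δhat) σhat v + gauss δhat σhat v) / 2) / gauss 0 1 v) := by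
    intro μ0 _ v hp hle
    apply Real.log_le_log (div_pos hp (mul_pos two_pos (hqpos v)))
    rw [div_le_div_iff₀ (mul_pos two_pos (hqpos v)) (hqpos v)]
    nlinarith [hqpos v]
  have hmono : ∀ v : ℝ, G v ≤ F v := by
    intro v
    have hp1 := gauss_pos (μ := -δhat) hσh v
    have hp2 := gauss_pos (μ := δhat) hσh v
    have h1 := hlogle (-δhat) hσh v hp1 (by linarith)
    have h2 := hlogle δhat hσh v hp2 (by linarith)
    rw [hG_def, hF_def]
    dsimp only
    have e1 := mul_le_mul_of_nonneg_left h1 hp1.le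
    have e2 := mul_le_mul_of_nonneg_left h2 hp2.le
    set L := Real.log (((gauss (-δhat) σhat v + gauss δhat σhat v) / 2) / gauss 0 1 v) with hL
    have hsplit : (gauss (-δhat) σhat v + gauss δhat σhat v) / 2 * L
        = 1/2 * (gauss (-δhat) σhat v * L) + 1/2 * (gauss δhat σhat v * L) := by ring
    rw [hsplit]
    linarith [e1, e2]
  -- integrability of F
  have contg : ∀ μ0 σ0 : ℝ, Continuous (gauss μ0 σ0) := by
    intro μ0 σ0; unfold gauss; fun_prop
  have contP : Continuous (fun v : ℝ => (gauss (-δhat) σhat v + gauss δhat σhat v) / 2) :=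
    ((contg _ _).add (contg _ _)).div_const 2
  have contF : Continuous F := by
    rw [hF_def]
    exact contP.mul ((contP.div (contg 0 1) fun v => (hqpos v).ne').log
      fun v => (div_pos (hPpos v) (hqpos v)).ne')
  have hFint : Integrable F := by
    set C0 : ℝ := Real.log 2 + |Real.log σhat| + δhat ^ 2 / σhat ^ 2 with hC0_def
    set C2 : ℝ := 1/2 + 1/σhat^2 with hC2_def
    have hdom : Integrable (fun v : ℝ =>
        (1/2) * (gauss (-δhat) σhat v * (C0 + C2 * v ^ 2)) +
        (1/2) * (gauss δhat σhat v * (C0 + C2 * v ^ 2))) :=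
      ((gauss_poly_integrable' (-δhat) σhat C0 C2 hσh).const_mul _).add
        ((gauss_poly_integrable' δhat σhat C0 C2 hσh).const_mul _)
    refine hdom.mono' contF.aestronglyMeasurable (Filter.Eventually.of_forall fun v => ?_)
    have hp1 := gauss_pos (μ := -δhat) hσh v
    have hp2 := gauss_pos (μ := δhat) hσh v
    have hLabs : |Real.log (((gauss (-δhat) σhat v + gauss δhat σhat v) / 2) / gauss 0 1 v)|
        ≤ C0 + C2 * v ^ 2 := by
      rw [abs_le]
      constructor
      · -- lower bound
        have h1 := hlogle (-δhat) hσh v hp1 (by linarith)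
        have hlow : Real.log (gauss (-δhat) σhat v / (2 * gauss 0 1 v)) =
            -Real.log σhat - Real.log 2 - (v + δhat) ^ 2 / (2 * σhat ^ 2) + v ^ 2 / 2 := by
          rw [Real.log_div hp1.ne' (mul_pos two_pos (hqpos v)).ne',
            Real.log_mul two_ne_zero (hqpos v).ne', log_gauss hσh, log_gauss one_pos]
          rw [Real.log_one]
          ring_nf
        have hdiv : (v + δhat) ^ 2 / (2 * σhat ^ 2) ≤ δhat ^ 2 / σhat ^ 2 + 1/σhat^2 * v ^ 2 := by
          have hb : (v + δhat) ^ 2 ≤ 2 * δhat ^ 2 + 2 * v ^ 2 := by nlinarith [sq_nonneg (v - δhat)]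
          calc (v + δhat) ^ 2 / (2 * σhat ^ 2) ≤ (2 * δhat ^ 2 + 2 * v ^ 2) / (2 * σhat ^ 2) := by
                gcongr
            _ = δhat ^ 2 / σhat ^ 2 + 1/σhat^2 * v ^ 2 := by field_simp
        rw [hC0_def, hC2_def]
        have habs : Real.log σhat ≤ |Real.log σhat| := le_abs_self _
        nlinarith [sq_nonneg v, h1, hlow, hdiv]
      · -- upper bound
        have hPle : (gauss (-δhat) σhat v + gauss δhat σhat v) / 2
            ≤ 1 / (σhat * Real.sqrt (2 * π)) := by
          have := gauss_le (μ := -δhat) hσh v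
          have := gauss_le (μ := δhat) hσh v
          linarith
        have hlog1 : Real.log (((gauss (-δhat) σhat v + gauss δhat σhat v) / 2) / gauss 0 1 v)
            ≤ Real.log ((1 / (σhat * Real.sqrt (2 * π))) / gauss 0 1 v) := by
          apply Real.log_le_log (div_pos (hPpos v) (hqpos v))
          exact div_le_div_of_nonneg_right hPle (hqpos v).le
        have hM : Real.log ((1 / (σhat * Real.sqrt (2 * π))) / gauss 0 1 v)
            = -Real.log σhat + v ^ 2 / 2 := by
          have hsq : (0:ℝ) < Real.sqrt (2 * π) := Real.sqrt_pos.mpr (by positivity)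
          rw [Real.log_div (by positivity) (hqpos v).ne', one_div, Real.log_inv,
            Real.log_mul hσh.ne' hsq.ne', log_gauss one_pos, Real.log_one]
          ring_nf
        rw [hC0_def, hC2_def]
        have habs : -Real.log σhat ≤ |Real.log σhat| := neg_le_abs _
        have hlog2 : (0:ℝ) ≤ Real.log 2 := Real.log_nonneg one_le_two
        nlinarith [sq_nonneg v, hlog1, hM, mul_nonneg
          (by positivity : (0:ℝ) ≤ 1/σhat^2) (sq_nonneg v),
          div_nonneg (sq_nonneg δhat) (sq_nonneg σhat)]
    rw [hF_def]
    have : ‖((gauss (-δhat) σhat v + gauss δhat σhat v) / 2) *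
        Real.log (((gauss (-δhat) σhat v + gauss δhat σhat v) / 2) / gauss 0 1 v)‖
        = ((gauss (-δhat) σhat v + gauss δhat σhat v) / 2) *
          |Real.log (((gauss (-δhat) σhat v + gauss δhat σhat v) / 2) / gauss 0 1 v)| := by
      rw [Real.norm_eq_abs, abs_mul, abs_of_pos (hPpos v)]
    rw [this]
    have := mul_le_mul_of_nonneg_left hLabs (hPpos v).le
    nlinarith [this]
  -- conclude
  have hmain := integral_mono hGint hFint hmono
  have hklF : klDiv (fun v => (gauss (-δhat) σhat v + gauss δhat σhat v) / 2) (gauss 0 1)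
      = ∫ v : ℝ, F v := rfl
  have hlogid : (1/2 : ℝ) * Real.log (1 + r ^ 2) = -Real.log σhat := by
    have h1r : 1 + r ^ 2 = (σ ^ 2 + δ ^ 2) / σ ^ 2 := by
      rw [hr, div_pow]; field_simp
    have hlogσhat : Real.log σhat = Real.log σ - Real.log s := by
      rw [hσhat, Real.log_div hσ.ne' hs.ne']
    have h2 : Real.log (1 + r ^ 2) = Real.log (σ ^ 2 + δ ^ 2) - Real.log (σ ^ 2) := by
      rw [h1r, Real.log_div (by positivity) (by positivity)]
    have h3 : Real.log (σ ^ 2 + δ ^ 2) = 2 * Real.log s := by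
      rw [← hs2, Real.log_pow]; push_cast; ring
    have h4 : Real.log (σ ^ 2) = 2 * Real.log σ := by
      rw [Real.log_pow]; push_cast; ring
    linarith
  rw [ge_iff_le, hklF]
  calc (1/2 : ℝ) * Real.log (1 + r ^ 2) - Real.log 2
      = -Real.log σhat - Real.log 2 := by rw [hlogid]
    _ = ∫ v : ℝ, G v := hGval.symm
    _ ≤ ∫ v : ℝ, F v := hmain
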